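/- Let n > 2, and k odd with 2^r < k < 2^{r+1} and k < 2^n. Then {k·2^{n+i} + 1 : 0 ≤ i ≤ n + r} is the minimal generating set of P_k(n); in particular the embedding dimension of P_k(n) equals n + r + 1. -/

import Mathlib

lemma sum_map_gen (K : ℕ) (es : Multiset ℕ) :
    (es.map (fun e => K * 2 ^ e + 1)).sum = K * (es.map (fun e => 2 ^ e)).sum + Multiset.card es := by
  induction es using Multiset.induction with
  | empty => simp
  | cons a m ih => simp [ih, Nat.mul_add]; ring

lemma exists_rep_lt : ∀ (E u : ℕ), u < 2 ^ E →
    ∃ es : Multiset ℕ, Multiset.card es ≤ E ∧ (∀ e ∈ es, e < E) ∧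
      (es.map (fun e => 2 ^ e)).sum = u := by
  intro E
  induction E with
  | zero => intro u hu; interval_cases u; exact ⟨0, by simp⟩
  | succ E ih =>
    intro u hu
    have h2E : (2:ℕ) ^ (E+1) = 2 * 2 ^ E := by ring
    obtain ⟨es, h1, h2, h3⟩ := ih (u / 2) (by omega)
    have hsum : ((es.map (fun e => e + 1)).map (fun e => 2 ^ e)).sum = 2 * (u / 2) := by
      rw [Multiset.map_map]
      have : ((fun e => 2 ^ e) ∘ fun e => e + 1) = fun e => 2 * 2 ^ e := by
        funext e; simp [pow_succ]; ring
      rw [this, Multiset.sum_map_mul_left, h3]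
    rcases Nat.even_or_odd u with he | ho
    · refine ⟨es.map (fun e => e + 1), ?_, ?_, ?_⟩
      · simpa using h1.trans (Nat.le_succ E)
      · intro e he'; obtain ⟨a, ha, rfl⟩ := Multiset.mem_map.mp he'
        exact Nat.add_lt_add_right (h2 a ha) 1
      · rw [hsum]; obtain ⟨v, rfl⟩ := he; omega
    · refine ⟨0 ::ₘ es.map (fun e => e + 1), ?_, ?_, ?_⟩
      · simpa using h1
      · intro e he'
        rcases Multiset.mem_cons.mp he' with rfl | hm
        · omega
        · obtain ⟨a, ha, rfl⟩ := Multiset.mem_map.mp hm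
          exact Nat.add_lt_add_right (h2 a ha) 1
      · rw [Multiset.map_cons, Multiset.sum_cons, hsum]
        obtain ⟨v, rfl⟩ := ho; simp; omega

lemma card_le_sum_pow (es : Multiset ℕ) :
    Multiset.card es ≤ (es.map (fun e => 2 ^ e)).sum := by
  induction es using Multiset.induction with
  | empty => simp
  | cons a m ih => simp; have := Nat.one_le_two_pow (n := a); omega

lemma split_lemma (F : ℕ) : ∀ (d : ℕ) (es : Multiset ℕ), (∀ e ∈ es, e ≤ F) →
    Multiset.card es + d ≤ (es.map (fun e => 2 ^ e)).sum →
    ∃ es' : Multiset ℕ, (∀ e ∈ es', e ≤ F) ∧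
      Multiset.card es' = Multiset.card es + d ∧
      (es'.map (fun e => 2 ^ e)).sum = (es.map (fun e => 2 ^ e)).sum := by
  intro d
  induction d with
  | zero => intro es h1 h2; exact ⟨es, h1, by simp, rfl⟩
  | succ d ih =>
    intro es h1 h2
    have hex : ∃ e ∈ es, 0 < e := by
      by_contra hc
      push_neg at hc
      have : es.map (fun e => 2 ^ e) = es.map (fun _ => 1) := by
        apply Multiset.map_congr rfl
        intro x hx
        have hx0 : x = 0 := Nat.le_zero.mp (hc x hx)
        simp [hx0]
      rw [this] at h2
      simp only [Multiset.map_const', Multiset.sum_replicate, smul_eq_mul, mul_one] at h2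
      omega
    obtain ⟨e, he, hepos⟩ := hex
    set es2 : Multiset ℕ := (e-1) ::ₘ (e-1) ::ₘ es.erase e with hes2
    have hpos : 0 < Multiset.card es := Multiset.card_pos.mpr (by
      intro h0; rw [h0] at he; exact absurd he (Multiset.notMem_zero e))
    have hcard : Multiset.card es2 = Multiset.card es + 1 := by
      rw [hes2]
      simp only [Multiset.card_cons, Multiset.card_erase_of_mem he, Nat.pred_eq_sub_one]
      omega
    have hcons : es = e ::ₘ es.erase e := (Multiset.cons_erase he).symm
    have hpow : (2:ℕ) ^ (e-1) + 2 ^ (e-1) = 2 ^ e := by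
      have he1 : e - 1 + 1 = e := by omega
      calc (2:ℕ)^(e-1) + 2^(e-1) = 2^(e-1) * 2 := by ring
      _ = 2 ^ e := by rw [← pow_succ, he1]
    have hsum : (es2.map (fun e => 2 ^ e)).sum = (es.map (fun e => 2 ^ e)).sum := by
      conv_rhs => rw [hcons]
      rw [hes2]
      simp only [Multiset.map_cons, Multiset.sum_cons]
      omega
    have h1' : ∀ x ∈ es2, x ≤ F := by
      intro x hx
      rcases Multiset.mem_cons.mp hx with rfl | hx2
      · exact le_trans (by omega) (h1 e he)
      · rcases Multiset.mem_cons.mp hx2 with rfl | hx3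
        · exact le_trans (by omega) (h1 e he)
        · exact h1 x (Multiset.mem_of_mem_erase hx3)
    obtain ⟨es', a, b, c⟩ := ih es2 h1' (by rw [hsum, hcard]; omega)
    exact ⟨es', a, by omega, by rw [c, hsum]⟩

lemma main_rep (F t S : ℕ) (h1 : S / 2 ^ F + F ≤ t) (h2 : t ≤ S) :
    ∃ es : Multiset ℕ, Multiset.card es = t ∧ (∀ e ∈ es, e ≤ F) ∧
      (es.map (fun e => 2 ^ e)).sum = S := by
  set q := S / 2 ^ F with hq
  set u := S % 2 ^ F with hu
  obtain ⟨esu, hc, hlt, hs⟩ := exists_rep_lt F u (Nat.mod_lt _ (by positivity))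
  set es0 : Multiset ℕ := Multiset.replicate q F + esu with hes0
  have hcard0 : Multiset.card es0 = q + Multiset.card esu := by simp [hes0]
  have hsum0 : (es0.map (fun e => 2 ^ e)).sum = S := by
    rw [hes0]
    simp only [Multiset.map_add, Multiset.sum_add, Multiset.map_replicate,
      Multiset.sum_replicate, hs, smul_eq_mul]
    rw [hq, hu]
    exact Nat.div_add_mod' S (2 ^ F)
  have hle0 : ∀ e ∈ es0, e ≤ F := by
    intro e he
    rcases Multiset.mem_add.mp he with h | h
    · rw [Multiset.eq_of_mem_replicate h]
    · exact le_of_lt (hlt e h)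
  obtain ⟨es', a, b, c⟩ := split_lemma F (t - (q + Multiset.card esu)) es0 hle0
    (by rw [hsum0, hcard0]; omega)
  exact ⟨es', by omega, a, by rw [c, hsum0]⟩

lemma exps_of_mem (K : ℕ) (P : ℕ → Prop) : ∀ (m : Multiset ℕ),
    (∀ x ∈ m, ∃ e, P e ∧ x = K * 2 ^ e + 1) →
    ∃ es : Multiset ℕ, Multiset.card es = Multiset.card m ∧ (∀ e ∈ es, P e) ∧
      m.sum = K * (es.map (fun e => 2 ^ e)).sum + Multiset.card m := by
  intro m
  induction m using Multiset.induction with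
  | empty => intro _; exact ⟨0, by simp⟩
  | cons a m ih =>
    intro h
    obtain ⟨es, h1, h2, h3⟩ := ih (fun x hx => h x (Multiset.mem_cons_of_mem hx))
    obtain ⟨e, hPe, rfl⟩ := h a (Multiset.mem_cons_self a m)
    refine ⟨e ::ₘ es, by simp [h1], ?_, ?_⟩
    · intro x hx; rcases Multiset.mem_cons.mp hx with rfl | hx2
      · exact hPe
      · exact h2 x hx2
    · simp [h3, Nat.mul_add]; ring

lemma four_mul_le_pow (F : ℕ) (hF : 4 ≤ F) : 4 * F ≤ 2 ^ F := by
  obtain ⟨m, rfl⟩ : ∃ m, F = m + 4 := ⟨F - 4, by omega⟩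
  have h1 : m < 2 ^ m := Nat.lt_two_pow_self (n := m)
  have h2 : (2:ℕ) ^ (m + 4) = 16 * 2 ^ m := by ring
  omega

lemma exists_rep_of_big (K F j : ℕ) (hF : 4 ≤ F) (hK1 : 2 ^ F < K)
    (hK2 : K + 2 ≤ 2 ^ (F + 1)) (hj : F + 1 ≤ j) :
    ∃ es : Multiset ℕ, (∀ e ∈ es, e ≤ F) ∧
      (es.map (fun e => K * 2 ^ e + 1)).sum = K * 2 ^ j + 1 := by
  obtain ⟨E, hE⟩ : ∃ E, E = 2 ^ F := ⟨_, rfl⟩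
  obtain ⟨P, hP⟩ : ∃ P, P = 2 ^ j := ⟨_, rfl⟩
  obtain ⟨D, hD⟩ : ∃ D, D = K * E + 1 := ⟨_, rfl⟩
  obtain ⟨N, hN⟩ : ∃ N, N = P + (F - 1) * E := ⟨_, rfl⟩
  obtain ⟨c, hc⟩ : ∃ c, c = N / D + 1 := ⟨_, rfl⟩
  have hDpos : 0 < D := by rw [hD]; positivity
  have hE16 : 16 ≤ E := by
    rw [hE]
    calc (16:ℕ) = 2 ^ 4 := by norm_num
    _ ≤ 2 ^ F := Nat.pow_le_pow_right (by norm_num) hF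
  have h4F : 4 * F ≤ E := by rw [hE]; exact four_mul_le_pow F hF
  have hK1' : E < K := by rw [hE]; exact hK1
  have hFK : 4 * F ≤ K := by omega
  have h2E : 2 * E ≤ P := by
    rw [hE, hP]
    calc 2 * 2 ^ F = 2 ^ (F + 1) := by ring
    _ ≤ 2 ^ j := Nat.pow_le_pow_right (by norm_num) hj
  have hK2E : K + 2 ≤ 2 * E := by
    have : (2:ℕ) ^ (F + 1) = 2 * E := by rw [hE]; ring
    omega
  -- key products
  have hKEpos : 1 ≤ K * E := Nat.one_le_iff_ne_zero.mpr (Nat.mul_ne_zero (by omega) (by omega))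
  -- cond2' : c * K + c + 1 ≤ P
  have cond2' : c * K + c + 1 ≤ P := by
    by_cases hND : N < D
    · have hc1 : c = 1 := by rw [hc, Nat.div_eq_of_lt hND]
      rw [hc1]; omega
    · push_neg at hND
      have hKE1 : (K - (F - 1)) * E + (F - 1) * E = K * E := by
        rw [← Nat.add_mul]; congr 1; omega
      have h2j : (K - (F - 1)) * E ≤ P := by rw [hD] at hND; rw [hN] at hND; omega
      have step1 : 2 * (K * E) ≤ 3 * P := by
        have hmul : 2 * K * E ≤ 3 * (K - (F - 1)) * E :=
          Nat.mul_le_mul_right E (by omega)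
        calc 2 * (K * E) = 2 * K * E := by ring
        _ ≤ 3 * (K - (F - 1)) * E := hmul
        _ = 3 * ((K - (F - 1)) * E) := by ring
        _ ≤ 3 * P := Nat.mul_le_mul_left 3 h2j
      have hFKE : (F - 1) * E + 1 ≤ K * E := by
        have h1 : (F - 1 + 1) * E ≤ K * E := Nat.mul_le_mul_right E (by omega)
        have h2 : (F - 1 + 1) * E = (F - 1) * E + E := by ring
        omega
      have step2 : N + D ≤ 4 * P := by rw [hN, hD]; omega
      have step3 : (N + D) * (K + 1) ≤ 8 * (P * K) := by
        calc (N + D) * (K + 1) ≤ (4 * P) * (K + 1) := Nat.mul_le_mul_right _ step2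
        _ ≤ (4 * P) * (2 * K) := Nat.mul_le_mul_left _ (by omega)
        _ = 8 * (P * K) := by ring
      have step4 : 8 * (P * K) + D ≤ P * D := by
        have hPD : P * D = P * (K * E) + P := by rw [hD]; ring
        have h16 : 16 * (P * K) ≤ P * (K * E) := by
          calc 16 * (P * K) = P * (K * 16) := by ring
          _ ≤ P * (K * E) := Nat.mul_le_mul_left _ (Nat.mul_le_mul_left _ hE16)
        have hEK : 2 * E * K ≤ P * K := Nat.mul_le_mul_right K h2E
        have hEKa : 2 * E * K = 2 * (E * K) := by ring
        have hEK2 : E * K = K * E := by ring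
        have hPKpos : 1 ≤ P * K := Nat.one_le_iff_ne_zero.mpr
          (Nat.mul_ne_zero (by omega) (by omega))
        rw [hPD, hD]
        omega
      have hcD : c * D ≤ N + D := by
        have h1 := Nat.div_mul_le_self N D
        have h2 : c * D = N / D * D + D := by rw [hc]; ring
        omega
      have hchain : c * (K + 1) * D + D ≤ P * D := by
        have h1 : c * (K + 1) * D = c * D * (K + 1) := by ring
        have h2 : c * D * (K + 1) ≤ (N + D) * (K + 1) := Nat.mul_le_mul_right _ hcD
        omega
      have hlt : c * (K + 1) < P := by
        have := lt_of_mul_lt_mul_right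
          (show c * (K + 1) * D < P * D by omega) (Nat.zero_le D)
        exact this
      have hexp : c * (K + 1) = c * K + c := by ring
      omega
  have hcpos : 1 ≤ c := by rw [hc]; exact Nat.le_add_left 1 _
  have hcP : c + 1 ≤ P := by omega
  obtain ⟨S, hSdef⟩ : ∃ S, S + c = P := ⟨P - c, by omega⟩
  have hcomm : K * c = c * K := by ring
  -- cond3
  have cond3 : 1 + K * c ≤ S := by omega
  -- cond1
  have hcDN : N + 1 ≤ c * D := by
    have e1 : c * D = D * (N / D) + D := by rw [hc]; ring
    have e2 := Nat.div_add_mod N D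
    have e3 := Nat.mod_lt N hDpos
    omega
  have hcDe : c * D = c * (K * E) + c := by rw [hD]; ring
  have hKcF : F ≤ K * c := by
    have h1 : K * 1 ≤ K * c := Nat.mul_le_mul_left K hcpos
    omega
  have cond1 : S / E + F ≤ 1 + K * c := by
    have hlt2 : S < (K * c - F + 1) * E := by
      have hid : (K * c - F + 1) * E + F * E = K * c * E + E := by
        have h0 : K * c - F + 1 + F = K * c + 1 := by omega
        rw [← Nat.add_mul, h0, Nat.add_mul, Nat.one_mul]
      have hFE : F * E = (F - 1) * E + E := by
        have h0 : F = F - 1 + 1 := by omega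
        calc F * E = (F - 1 + 1) * E := by rw [← h0]
        _ = (F - 1) * E + 1 * E := by rw [Nat.add_mul]
        _ = (F - 1) * E + E := by rw [Nat.one_mul]
      have hKcE : c * (K * E) = K * c * E := by ring
      rw [hN] at hcDN
      omega
    have := (Nat.div_lt_iff_lt_mul (show 0 < E by omega)).mpr hlt2
    omega
  obtain ⟨es, hcard, hexp, hsum⟩ := main_rep F (1 + K * c) S (by rw [← hE]; exact cond1) cond3
  refine ⟨es, hexp, ?_⟩
  rw [sum_map_gen, hsum, hcard]
  have hfin : K * S + K * c = K * P := by rw [← Nat.mul_add, hSdef]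
  rw [← hP]
  omega

lemma not_mem_closure_rest (K F i : ℕ) (hK : 2 ^ F < K) (hi : i ≤ F) (X : Set ℕ)
    (hX : ∀ x ∈ X, ∃ e, (e ≤ F ∧ e ≠ i) ∧ x = K * 2 ^ e + 1) :
    K * 2 ^ i + 1 ∉ AddSubmonoid.closure X := by
  intro hmem
  obtain ⟨m, hm, hsum⟩ := AddSubmonoid.exists_multiset_of_mem_closure hmem
  obtain ⟨es, hcard, hP, heq⟩ :=
    exps_of_mem K (fun e => e ≤ F ∧ e ≠ i) m (fun x hx => hX x (hm x hx))
  have heq2 : K * 2 ^ i + 1 = K * (es.map (fun e => 2 ^ e)).sum + Multiset.card es := by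
    rw [hcard, ← heq, hsum]
  have h2iF : 2 ^ i ≤ 2 ^ F := Nat.pow_le_pow_right (by norm_num) hi
  by_cases hc0 : Multiset.card es = 0
  · have : es = 0 := Multiset.card_eq_zero.mp hc0
    rw [this] at heq2
    simp at heq2
  · by_cases hc1 : Multiset.card es = 1
    · obtain ⟨e, he⟩ := Multiset.card_eq_one.mp hc1
      have hPe := hP e (by rw [he]; exact Multiset.mem_singleton_self e)
      have hsum1 : ((({e} : Multiset ℕ)).map (fun e => 2 ^ e)).sum = 2 ^ e := by simp
      rw [he, hsum1, Multiset.card_singleton] at heq2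
      have h2 : (2:ℕ) ^ i = 2 ^ e :=
        Nat.eq_of_mul_eq_mul_left (Nat.lt_of_le_of_lt (Nat.zero_le _) hK) (by omega)
      exact hPe.2 (Nat.pow_right_injective (by norm_num) h2).symm
    · have hts := card_le_sum_pow es
      rcases Nat.lt_or_ge ((es.map (fun e => 2 ^ e)).sum) (2 ^ i) with hlt | hge
      · have hmul : K * (es.map (fun e => 2 ^ e)).sum + K ≤ K * 2 ^ i := by
          have h' : K * ((es.map (fun e => 2 ^ e)).sum + 1) ≤ K * 2 ^ i :=
            Nat.mul_le_mul_left K (by omega)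
          rw [Nat.mul_add, Nat.mul_one] at h'
          exact h'
        omega
      · have := Nat.mul_le_mul_left K hge
        omega


theorem proth_embedding_dimension (n k r : ℕ) (hn : 2 < n) (hk : Odd k)
    (hklt : k < 2 ^ n) (hr1 : 2 ^ r < k) (hr2 : k < 2 ^ (r + 1)) :
    AddSubmonoid.closure
        (↑((Finset.range (n + r + 1)).image (fun i => k * 2 ^ (n + i) + 1)) : Set ℕ) =
      AddSubmonoid.closure {m : ℕ | ∃ i : ℕ, m = k * 2 ^ (n + i) + 1} ∧
    (∀ B : Set ℕ,
        B ⊂ ↑((Finset.range (n + r + 1)).image (fun i => k * 2 ^ (n + i) + 1)) →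
        AddSubmonoid.closure B ≠
          AddSubmonoid.closure {m : ℕ | ∃ i : ℕ, m = k * 2 ^ (n + i) + 1}) ∧
    ((Finset.range (n + r + 1)).image (fun i => k * 2 ^ (n + i) + 1)).card = n + r + 1 := by
  have hr : 1 ≤ r := by
    by_contra h
    push_neg at h
    interval_cases r
    · norm_num at hr1 hr2; omega
  have hrn : r < n :=
    (Nat.pow_lt_pow_iff_right (by norm_num : 1 < 2)).mp (lt_trans hr1 hklt)
  obtain ⟨K, hK⟩ : ∃ K, K = k * 2 ^ n := ⟨_, rfl⟩
  have hgen : ∀ i : ℕ, k * 2 ^ (n + i) + 1 = K * 2 ^ i + 1 := by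
    intro i; rw [hK, pow_add, mul_assoc]
  have hF4 : 4 ≤ n + r := by omega
  have h8 : 8 ≤ 2 ^ n := by
    calc (8:ℕ) = 2 ^ 3 := by norm_num
    _ ≤ 2 ^ n := Nat.pow_le_pow_right (by norm_num) hn
  have hK1 : 2 ^ (n + r) < K := by
    rw [hK, pow_add, Nat.mul_comm]
    exact Nat.mul_lt_mul_of_pos_right hr1 (by positivity)
  have hK2 : K + 2 ≤ 2 ^ (n + r + 1) := by
    have h1 : (k + 1) * 2 ^ n ≤ 2 ^ (r + 1) * 2 ^ n :=
      Nat.mul_le_mul_right _ (by omega)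
    have h2 : (2:ℕ) ^ (r + 1) * 2 ^ n = 2 ^ (n + r + 1) := by
      rw [← pow_add]
      congr 1
      omega
    have h3 : (k + 1) * 2 ^ n = K + 2 ^ n := by rw [hK]; ring
    omega
  have hinj : Function.Injective fun i : ℕ => k * 2 ^ (n + i) + 1 := by
    intro a b hab
    simp only at hab
    have h1 : k * 2 ^ (n + a) = k * 2 ^ (n + b) := by omega
    have h2 : (2:ℕ) ^ (n + a) = 2 ^ (n + b) :=
      Nat.eq_of_mul_eq_mul_left (by omega) h1
    have := Nat.pow_right_injective (le_refl 2) h2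
    omega
  have hmemA : ∀ e, e < n + r + 1 → (k * 2 ^ (n + e) + 1) ∈
      (↑((Finset.range (n + r + 1)).image (fun i => k * 2 ^ (n + i) + 1)) : Set ℕ) := by
    intro e he
    exact Finset.mem_coe.mpr (Finset.mem_image.mpr ⟨e, Finset.mem_range.mpr he, rfl⟩)
  refine ⟨?_, ?_, ?_⟩
  · apply le_antisymm
    · apply AddSubmonoid.closure_mono
      intro x hx
      obtain ⟨i, _, rfl⟩ := Finset.mem_image.mp (Finset.mem_coe.mp hx)
      exact ⟨i, rfl⟩
    · rw [AddSubmonoid.closure_le]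
      rintro x ⟨j, rfl⟩
      by_cases hj : j < n + r + 1
      · exact AddSubmonoid.subset_closure (hmemA j hj)
      · push_neg at hj
        obtain ⟨es, hexp, hsum⟩ :=
          exists_rep_of_big K (n + r) j hF4 hK1 hK2 (by omega)
        rw [hgen j, ← hsum]
        apply AddSubmonoid.multiset_sum_mem
        intro x hx
        obtain ⟨e, he, rfl⟩ := Multiset.mem_map.mp hx
        apply AddSubmonoid.subset_closure
        have := hmemA e (by have := hexp e he; omega)
        rw [hgen e] at this
        exact this
  · intro B hB heq
    obtain ⟨x, hxA, hxB⟩ := Set.exists_of_ssubset hB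
    obtain ⟨i, hi, rfl⟩ : ∃ i, i < n + r + 1 ∧ x = k * 2 ^ (n + i) + 1 := by
      obtain ⟨i, hi, hxe⟩ := Finset.mem_image.mp (Finset.mem_coe.mp hxA)
      exact ⟨i, Finset.mem_range.mp hi, hxe.symm⟩
    have hxS : (k * 2 ^ (n + i) + 1) ∈
        AddSubmonoid.closure {m : ℕ | ∃ i : ℕ, m = k * 2 ^ (n + i) + 1} :=
      AddSubmonoid.subset_closure ⟨i, rfl⟩
    rw [← heq, hgen i] at hxS
    refine not_mem_closure_rest K (n + r) i hK1 (by omega) B ?_ hxS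
    intro y hy
    obtain ⟨e, he, hye⟩ := Finset.mem_image.mp (Finset.mem_coe.mp (hB.1 hy))
    refine ⟨e, ⟨by have := Finset.mem_range.mp he; omega, ?_⟩, by rw [← hye, hgen e]⟩
    rintro rfl
    exact hxB (by rwa [← hye] at hy)
  · rw [Finset.card_image_of_injective _ hinj, Finset.card_range]
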